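/- Let C be a clique cutset in a graph G with cut-partition (A, B, C), and let G_A = G[A ∪ C], G_B = G[B ∪ C]. Given tree decompositions T_A of G_A and T_B of G_B, one can combine them (by connecting a bag of T_A containing C to a bag of T_B containing C) into a tree decomposition T of G with independence number α(T) = max{α(T_A), α(T_B)}. -/

import Mathlib

open SimpleGraph

/-- `S` is an independent set in `G`. -/
def IsIndepOn {V : Type} (G : SimpleGraph V) (S : Set V) : Prop :=
  S.Pairwise fun u v => ¬ G.Adj u v

/-- The independence number of `G`. -/
noncomputable def indepNum {V : Type} (G : SimpleGraph V) : ℕ :=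
  sSup {n | ∃ S : Set V, IsIndepOn G S ∧ S.ncard = n}

/-- The clique number of `G`. -/
noncomputable def cliqueNumber {V : Type} (G : SimpleGraph V) : ℕ :=
  sSup {n | ∃ S : Set V, G.IsClique S ∧ S.ncard = n}

/-- A tree decomposition of a graph `G`. -/
structure TreeDecomp {V : Type} (G : SimpleGraph V) where
  ι : Type
  tree : SimpleGraph ι
  tree_isTree : tree.IsTree
  bag : ι → Set V
  mem_bag : ∀ v : V, ∃ t, v ∈ bag t
  edge_bag : ∀ ⦃u v : V⦄, G.Adj u v → ∃ t, u ∈ bag t ∧ v ∈ bag t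
  bag_connected : ∀ v : V, (tree.induce {t | v ∈ bag t}).Connected

/-- The independence number of a family of bags: the maximum independence number
of a subgraph of `G` induced by some bag. -/
noncomputable def bagAlpha {V : Type} (G : SimpleGraph V) {ι : Type} (bag : ι → Set V) : ℕ :=
  sSup {n | ∃ t, ∃ S : Set V, S ⊆ bag t ∧ IsIndepOn G S ∧ S.ncard = n}

/-- The independence number of a tree decomposition. -/
noncomputable def tdAlpha {V : Type} {G : SimpleGraph V} (td : TreeDecomp G) : ℕ :=
  bagAlpha G td.bag

/-- The width of a tree decomposition: maximum bag size minus one. -/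
noncomputable def tdWidth {V : Type} {G : SimpleGraph V} (td : TreeDecomp G) : ℕ :=
  sSup {n | ∃ t, (td.bag t).ncard = n} - 1

/-- The treewidth of `G`. -/
noncomputable def treewidth {V : Type} (G : SimpleGraph V) : ℕ :=
  sInf {w | ∃ td : TreeDecomp G, tdWidth td = w}

/-- The tree-independence number of `G`. -/
noncomputable def treeIndepNum {V : Type} (G : SimpleGraph V) : ℕ :=
  sInf {k | ∃ td : TreeDecomp G, tdAlpha td = k}

/-- A graph is chordal if it has no induced cycle of length at least four. -/
def Chordal {V : Type} (G : SimpleGraph V) : Prop :=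
  ∀ n : ℕ, 4 ≤ n → IsEmpty (cycleGraph n ↪g G)

attribute [local instance] Classical.decEq

variable {ι : Type} {T : SimpleGraph ι}

lemma exists_first (S : Set ι) : ∀ {a b : ι} (w : T.Walk a b), w.IsPath → b ∈ S →
    ∃ (m : ι) (u : T.Walk a m), u.IsPath ∧ m ∈ S ∧ (∀ z ∈ u.support, z ∈ S → z = m) ∧
      (∀ z ∈ u.support, z ∈ w.support) := by
  intro a b w
  induction w with
  | nil =>
    intro _ hb
    exact ⟨_, Walk.nil, Walk.IsPath.nil, hb, by simp, by simp⟩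
  | @cons a a' b h w ih =>
    intro hp hb
    by_cases ha : a ∈ S
    · exact ⟨a, Walk.nil, Walk.IsPath.nil, ha, by simp, by simp⟩
    · obtain ⟨m, u, hu, hmS, honly, hsub⟩ := ih (hp.of_cons) hb
      refine ⟨m, Walk.cons h u, ?_, hmS, ?_, ?_⟩
      · rw [Walk.cons_isPath_iff]
        refine ⟨hu, fun hmem => ?_⟩
        exact ((Walk.cons_isPath_iff h w).mp hp).2 (hsub a hmem)
      · intro z hz hzS
        rcases Walk.support_cons h u ▸ hz with hz
        rcases List.mem_cons.mp hz with rfl | hz'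
        · exact absurd hzS ha
        · exact honly z hz' hzS
      · intro z hz
        rcases List.mem_cons.mp (Walk.support_cons h u ▸ hz) with rfl | hz'
        · exact Walk.start_mem_support _
        · rw [Walk.support_cons]
          exact List.mem_cons_of_mem _ (hsub z hz')

noncomputable def thePath (hT : T.IsTree) (u v : ι) : T.Walk u v :=
  ((hT.isConnected u v).some.toPath : T.Path u v).val

lemma thePath_isPath (hT : T.IsTree) (u v : ι) : (thePath hT u v).IsPath :=
  ((hT.isConnected u v).some.toPath : T.Path u v).property

lemma eq_thePath (hT : T.IsTree) {u v : ι} (p : T.Walk u v) (hp : p.IsPath) :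
    p = thePath hT u v :=
  congrArg Subtype.val
    (hT.IsAcyclic.path_unique ⟨p, hp⟩ ⟨thePath hT u v, thePath_isPath hT u v⟩)

lemma median (hT : T.IsTree) (a b c : ι) :
    ∃ m, m ∈ (thePath hT a b).support ∧ m ∈ (thePath hT a c).support ∧
      m ∈ (thePath hT b c).support := by
  set p := thePath hT b c with hpdef
  obtain ⟨m, u, hu, hmS, honly, -⟩ :=
    exists_first {z | z ∈ p.support} (thePath hT a b) (thePath_isPath hT a b)
      (Walk.start_mem_support p)
  have hmp : m ∈ p.support := hmS
  -- the piece of u's support other than m is disjoint from p.support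
  have hdisj : ∀ z ∈ u.support, z ≠ m → z ∉ p.support := by
    intro z hz hne hzp
    exact hne (honly z hz hzp)
  -- path from a to b through m
  have key : ∀ {d : ι} (q : T.Walk m d), q.IsPath → (∀ z ∈ q.support, z ∈ p.support) →
      (u.append q).IsPath := by
    intro d q hq hqsub
    rw [Walk.isPath_def, Walk.support_append]
    refine List.Nodup.append ((Walk.isPath_def u).mp hu) ?_ ?_
    · have := (Walk.isPath_def q).mp hq
      rw [Walk.support_eq_cons q] at this
      exact (List.nodup_cons.mp this).2
    · intro z hz hz'
      have hzq : z ∈ q.support := by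
        rw [Walk.support_eq_cons q]
        exact List.mem_cons_of_mem _ hz'
      have hzm : z = m := honly z hz (hqsub z hzq)
      subst hzm
      have := (Walk.isPath_def q).mp hq
      rw [Walk.support_eq_cons q] at this
      exact (List.nodup_cons.mp this).1 hz'
  -- q1 : m → b  along p (reverse of takeUntil)
  have hq1 : ((p.takeUntil m hmp).reverse : T.Walk m b).IsPath :=
    ((thePath_isPath hT b c).takeUntil hmp).reverse
  have hq1sub : ∀ z ∈ ((p.takeUntil m hmp).reverse).support, z ∈ p.support := by
    intro z hz
    rw [Walk.support_reverse] at hz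
    exact Walk.support_takeUntil_subset p hmp (List.mem_reverse.mp hz)
  have h1 : (u.append ((p.takeUntil m hmp).reverse)).IsPath :=
    key _ hq1 hq1sub
  have hq2 : (p.dropUntil m hmp).IsPath := (thePath_isPath hT b c).dropUntil hmp
  have hq2sub : ∀ z ∈ (p.dropUntil m hmp).support, z ∈ p.support :=
    fun z hz => Walk.support_dropUntil_subset p hmp hz
  have h2 : (u.append (p.dropUntil m hmp)).IsPath := key _ hq2 hq2sub
  refine ⟨m, ?_, ?_, hmp⟩
  · rw [← eq_thePath hT _ h1]
    exact Walk.mem_support_append_iff _ _ |>.mpr (Or.inl (Walk.end_mem_support u))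
  · rw [← eq_thePath hT _ h2]
    exact Walk.mem_support_append_iff _ _ |>.mpr (Or.inl (Walk.end_mem_support u))

def Good (hT : T.IsTree) (S : Set ι) : Prop :=
  S.Nonempty ∧ ∀ u ∈ S, ∀ v ∈ S, ∀ z ∈ (thePath hT u v).support, z ∈ S

lemma good_of_connected (hT : T.IsTree) {S : Set ι} (hc : (T.induce S).Connected) :
    Good hT S := by
  obtain ⟨⟨x, hx⟩⟩ := hc.nonempty
  refine ⟨⟨x, hx⟩, ?_⟩
  intro u hu v hv z hz
  obtain ⟨w0⟩ := hc ⟨u, hu⟩ ⟨v, hv⟩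
  set w : T.Walk u v := w0.map (Embedding.induce S).toHom with hw
  have hws : ∀ y ∈ w.support, y ∈ S := by
    intro y hy
    replace hy : y ∈ (w0.map (Embedding.induce S).toHom).support := hy
    rw [Walk.support_map] at hy
    obtain ⟨⟨y', hy'⟩, _, rfl⟩ := List.mem_map.mp hy
    exact hy'
  have : w.bypass = thePath hT u v := eq_thePath hT _ (Walk.bypass_isPath w)
  rw [← this] at hz
  exact hws z (Walk.support_bypass_subset w hz)

lemma helly3 (hT : T.IsTree) {S1 S2 S3 : Set ι} (g1 : Good hT S1) (g2 : Good hT S2)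
    (g3 : Good hT S3) (h12 : (S1 ∩ S2).Nonempty) (h13 : (S1 ∩ S3).Nonempty)
    (h23 : (S2 ∩ S3).Nonempty) : (S1 ∩ S2 ∩ S3).Nonempty := by
  obtain ⟨a, ha1, ha2⟩ := h12
  obtain ⟨b, hb1, hb3⟩ := h13
  obtain ⟨c, hc2, hc3⟩ := h23
  obtain ⟨m, hmab, hmac, hmbc⟩ := median hT a b c
  exact ⟨m, ⟨g1.2 a ha1 b hb1 m hmab, g2.2 a ha2 c hc2 m hmac⟩, g3.2 b hb3 c hc3 m hmbc⟩

lemma helly {α : Type} (hT : T.IsTree) (F : Finset α) :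
    ∀ (S : α → Set ι), F.Nonempty → (∀ v ∈ F, Good hT (S v)) →
      (∀ u ∈ F, ∀ v ∈ F, (S u ∩ S v).Nonempty) → ∃ t, ∀ v ∈ F, t ∈ S v := by
  induction F using Finset.induction_on with
  | empty => intro S hne; exact absurd hne (by simp)
  | @insert x F hx ih =>
    intro S _ goods pairs
    rcases F.eq_empty_or_nonempty with rfl | hFne
    · obtain ⟨t, ht⟩ := (goods x (Finset.mem_insert_self x ∅)).1
      refine ⟨t, fun v hv => ?_⟩
      rcases Finset.mem_insert.mp hv with rfl | h
      · exact ht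
      · simp at h
    · have hxmem : x ∈ insert x F := Finset.mem_insert_self x F
      obtain ⟨t, ht⟩ := ih (fun v => S v ∩ S x) hFne
        (fun v hv => by
          have hv' := Finset.mem_insert_of_mem (b := x) hv
          refine ⟨pairs v hv' x hxmem, ?_⟩
          intro u hu w hw z hz
          exact ⟨(goods v hv').2 u hu.1 w hw.1 z hz, (goods x hxmem).2 u hu.2 w hw.2 z hz⟩)
        (fun u hu v hv => by
          have hu' := Finset.mem_insert_of_mem (b := x) hu
          have hv' := Finset.mem_insert_of_mem (b := x) hv
          obtain ⟨z, ⟨hz1, hz2⟩, hz3⟩ := helly3 hT (goods u hu') (goods v hv') (goods x hxmem)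
            (pairs u hu' v hv') (pairs u hu' x hxmem) (pairs v hv' x hxmem)
          exact ⟨z, ⟨hz1, hz3⟩, hz2, hz3⟩)
      obtain ⟨v0, hv0⟩ := hFne
      refine ⟨t, fun v hv => ?_⟩
      rcases Finset.mem_insert.mp hv with rfl | h
      · exact (ht v0 hv0).2
      · exact (ht v h).1

lemma clique_in_bag {W : Type} {H : SimpleGraph W} (td : TreeDecomp H) {K : Set W}
    (hKfin : K.Finite) (hcl : H.IsClique K) : ∃ t, ∀ v ∈ K, v ∈ td.bag t := by
  have hne : Nonempty td.ι := td.tree_isTree.isConnected.nonempty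
  rcases K.eq_empty_or_nonempty with rfl | hKne
  · exact ⟨Classical.arbitrary _, by simp⟩
  · obtain ⟨t, ht⟩ := helly td.tree_isTree hKfin.toFinset (fun v => {t | v ∈ td.bag t})
      (by rwa [Set.Finite.toFinset_nonempty])
      (fun v _ => good_of_connected _ (td.bag_connected v))
      (fun u hu v hv => by
        rw [Set.Finite.mem_toFinset] at hu hv
        by_cases huv : u = v
        · subst huv
          obtain ⟨t, ht⟩ := td.mem_bag u
          exact ⟨t, ht, ht⟩
        · obtain ⟨t, h1, h2⟩ := td.edge_bag (hcl hu hv huv)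
          exact ⟨t, h1, h2⟩)
    exact ⟨t, fun v hv => ht v (hKfin.mem_toFinset.mpr hv)⟩

section Glue
variable {ι1 ι2 : Type} (T1 : SimpleGraph ι1) (T2 : SimpleGraph ι2) (a : ι1) (b : ι2)

/-- Gluing two graphs by one edge between `a` and `b`. -/
def glue : SimpleGraph (ι1 ⊕ ι2) where
  Adj x y := match x, y with
    | .inl s, .inl t => T1.Adj s t
    | .inr s, .inr t => T2.Adj s t
    | .inl s, .inr t => s = a ∧ t = b
    | .inr s, .inl t => s = b ∧ t = a
  symm := by
    constructor
    rintro (s|s) (t|t) h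
    · exact h.symm
    · exact ⟨h.2, h.1⟩
    · exact ⟨h.2, h.1⟩
    · exact h.symm
  loopless := by
    constructor
    rintro (s|s) h
    · exact T1.loopless.irrefl s h
    · exact T2.loopless.irrefl s h

@[simp] lemma glue_adj_inl_inl {s t : ι1} :
    (glue T1 T2 a b).Adj (.inl s) (.inl t) ↔ T1.Adj s t := Iff.rfl
@[simp] lemma glue_adj_inr_inr {s t : ι2} :
    (glue T1 T2 a b).Adj (.inr s) (.inr t) ↔ T2.Adj s t := Iff.rfl
@[simp] lemma glue_adj_inl_inr {s : ι1} {t : ι2} :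
    (glue T1 T2 a b).Adj (.inl s) (.inr t) ↔ s = a ∧ t = b := Iff.rfl
@[simp] lemma glue_adj_inr_inl {s : ι2} {t : ι1} :
    (glue T1 T2 a b).Adj (.inr s) (.inl t) ↔ s = b ∧ t = a := Iff.rfl

/-- The left inclusion as a graph homomorphism. -/
def glueInl : T1 →g glue T1 T2 a b := ⟨Sum.inl, fun h => h⟩
def glueInr : T2 →g glue T1 T2 a b := ⟨Sum.inr, fun h => h⟩

lemma glue_connected (h1 : T1.Connected) (h2 : T2.Connected) :
    (glue T1 T2 a b).Connected := by
  have reach : ∀ z, (glue T1 T2 a b).Reachable z (.inl a) := by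
    rintro (s|s)
    · exact (h1 s a).map (glueInl T1 T2 a b)
    · exact ((h2 s b).map (glueInr T1 T2 a b)).trans
        (Adj.reachable (show (glue T1 T2 a b).Adj (.inr b) (.inl a) from ⟨rfl, rfl⟩))
  haveI : Nonempty (ι1 ⊕ ι2) := ⟨.inl a⟩
  exact ⟨fun u v => (reach u).trans (reach v).symm⟩

lemma glue_cross : ∀ {x y : ι1 ⊕ ι2} (w : (glue T1 T2 a b).Walk x y),
    x.isLeft → y.isRight → s(Sum.inl a, Sum.inr b) ∈ w.edges := by
  intro x y w
  induction w with
  | nil =>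
    intro hx hy
    rename_i u
    cases u <;> simp_all
  | @cons x v y h w ih =>
    intro hx hy
    obtain ⟨x', rfl⟩ := Sum.isLeft_iff.mp hx
    cases v with
    | inl v' =>
      rw [Walk.edges_cons]
      exact List.mem_cons_of_mem _ (ih rfl hy)
    | inr v' =>
      obtain ⟨rfl, rfl⟩ := (glue_adj_inl_inr T1 T2 a b).mp h
      rw [Walk.edges_cons]
      exact List.mem_cons_self

lemma glue_proj_left : ∀ {x y : ι1 ⊕ ι2} (w : (glue T1 T2 a b).Walk x y),
    (∀ z ∈ w.support, z.isLeft) → ∃ (x' y' : ι1) (w' : T1.Walk x' y'),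
      x = .inl x' ∧ y = .inl y' ∧ w.support = w'.support.map Sum.inl ∧
      w.edges = w'.edges.map (Sym2.map Sum.inl) := by
  intro x y w
  induction w with
  | @nil x =>
    intro hx
    obtain ⟨x', rfl⟩ := Sum.isLeft_iff.mp (hx x (by simp))
    exact ⟨x', x', Walk.nil, rfl, rfl, by simp, by simp⟩
  | @cons x v y h w ih =>
    intro hall
    obtain ⟨x', rfl⟩ := Sum.isLeft_iff.mp (hall _ (Walk.start_mem_support _))
    have hv : v.isLeft := hall v (by rw [Walk.support_cons]; exact List.mem_cons_of_mem _ (Walk.start_mem_support _))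
    obtain ⟨v', rfl⟩ := Sum.isLeft_iff.mp hv
    obtain ⟨v'', y', w', hv'', rfl, hsup, hedg⟩ := ih
      (fun z hz => hall z (by rw [Walk.support_cons]; exact List.mem_cons_of_mem _ hz))
    obtain rfl : v'' = v' := by injection hv''.symm
    refine ⟨x', y', Walk.cons ((glue_adj_inl_inl T1 T2 a b).mp h) w', rfl, rfl, ?_, ?_⟩
    · simp [Walk.support_cons, hsup]
    · simp [Walk.edges_cons, hedg, Sym2.map_pair_eq]

lemma glue_proj_right : ∀ {x y : ι1 ⊕ ι2} (w : (glue T1 T2 a b).Walk x y),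
    (∀ z ∈ w.support, z.isRight) → ∃ (x' y' : ι2) (w' : T2.Walk x' y'),
      x = .inr x' ∧ y = .inr y' ∧ w.support = w'.support.map Sum.inr ∧
      w.edges = w'.edges.map (Sym2.map Sum.inr) := by
  intro x y w
  induction w with
  | @nil x =>
    intro hx
    obtain ⟨x', rfl⟩ := Sum.isRight_iff.mp (hx x (by simp))
    exact ⟨x', x', Walk.nil, rfl, rfl, by simp, by simp⟩
  | @cons x v y h w ih =>
    intro hall
    obtain ⟨x', rfl⟩ := Sum.isRight_iff.mp (hall _ (Walk.start_mem_support _))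
    have hv : v.isRight := hall v (by rw [Walk.support_cons]; exact List.mem_cons_of_mem _ (Walk.start_mem_support _))
    obtain ⟨v', rfl⟩ := Sum.isRight_iff.mp hv
    obtain ⟨v'', y', w', hv'', rfl, hsup, hedg⟩ := ih
      (fun z hz => hall z (by rw [Walk.support_cons]; exact List.mem_cons_of_mem _ hz))
    obtain rfl : v'' = v' := by injection hv''.symm
    refine ⟨x', y', Walk.cons ((glue_adj_inr_inr T1 T2 a b).mp h) w', rfl, rfl, ?_, ?_⟩
    · simp [Walk.support_cons, hsup]
    · simp [Walk.edges_cons, hedg, Sym2.map_pair_eq]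


lemma glue_one_sided {x0 : ι1} (c : (glue T1 T2 a b).Walk (.inl x0) (.inl x0))
    (hc : c.IsCycle) : ∀ z ∈ c.support, z.isLeft := by
  intro z hz
  by_contra hleft
  obtain ⟨z0, rfl⟩ := Sum.isRight_iff.mp (Sum.not_isLeft.mp hleft)
  have hsplit := Walk.take_spec c hz
  have h1 : s(Sum.inl a, Sum.inr b) ∈ (c.takeUntil _ hz).edges :=
    glue_cross T1 T2 a b _ rfl rfl
  have h2 : s(Sum.inl a, Sum.inr b) ∈ (c.dropUntil _ hz).edges := by
    have := glue_cross T1 T2 a b (c.dropUntil _ hz).reverse rfl rfl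
    rwa [Walk.edges_reverse, List.mem_reverse] at this
  have hnodup : c.edges.Nodup := hc.isCircuit.isTrail.edges_nodup
  rw [← hsplit, Walk.edges_append] at hnodup
  exact (List.disjoint_of_nodup_append hnodup) h1 h2

lemma isCycle_of_proj {ιa ιb : Type} {Ta : SimpleGraph ιa} {Tg : SimpleGraph ιb} {f : ιa → ιb}
    {x : ιa} {c : Tg.Walk (f x) (f x)} (hc : c.IsCycle) (c' : Ta.Walk x x)
    (hsup : c.support = c'.support.map f) (hedg : c.edges = c'.edges.map (Sym2.map f)) :
    c'.IsCycle := by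
  refine ⟨⟨⟨?_⟩, ?_⟩, ?_⟩
  · have := hc.isCircuit.isTrail.edges_nodup
    rw [hedg] at this
    exact this.of_map _
  · intro hnil
    subst hnil
    apply hc.ne_nil
    rw [← Walk.nil_iff_eq_nil, ← Walk.length_eq_zero_iff, ← Walk.length_edges, hedg]
    simp
  · have h := hc.support_nodup
    rw [hsup, ← List.map_tail] at h
    exact h.of_map _

lemma glue_isTree (hT1 : T1.IsTree) (hT2 : T2.IsTree) : (glue T1 T2 a b).IsTree := by
  constructor
  · exact glue_connected T1 T2 a b hT1.isConnected hT2.isConnected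
  · intro x c hc
    cases x with
    | inl x0 =>
      obtain ⟨x', y', c', hx', hy', hsup, hedg⟩ :=
        glue_proj_left T1 T2 a b c (glue_one_sided T1 T2 a b c hc)
      obtain rfl : x0 = x' := by injection hx'
      obtain rfl : x0 = y' := by injection hy'
      exact hT1.IsAcyclic c' (isCycle_of_proj hc c' hsup hedg)
    | inr x0 =>
      have hone : ∀ z ∈ c.support, z.isRight := by
        intro z hz
        by_contra hright
        obtain ⟨z0, rfl⟩ := Sum.isLeft_iff.mp (Sum.not_isRight.mp hright)
        have hsplit := Walk.take_spec c hz
        have h1 : s(Sum.inl a, Sum.inr b) ∈ (c.takeUntil _ hz).edges := by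
          have := glue_cross T1 T2 a b (c.takeUntil _ hz).reverse rfl rfl
          rwa [Walk.edges_reverse, List.mem_reverse] at this
        have h2 : s(Sum.inl a, Sum.inr b) ∈ (c.dropUntil _ hz).edges :=
          glue_cross T1 T2 a b _ rfl rfl
        have hnodup : c.edges.Nodup := hc.isCircuit.isTrail.edges_nodup
        rw [← hsplit, Walk.edges_append] at hnodup
        exact (List.disjoint_of_nodup_append hnodup) h1 h2
      obtain ⟨x', y', c', hx', hy', hsup, hedg⟩ := glue_proj_right T1 T2 a b c hone
      obtain rfl : x0 = x' := by injection hx'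
      obtain rfl : x0 = y' := by injection hy'
      exact hT2.IsAcyclic c' (isCycle_of_proj hc c' hsup hedg)

end Glue

theorem stmt12 {V : Type} [Fintype V] (G : SimpleGraph V) (A B C : Set V)
    (hA : A.Nonempty) (hB : B.Nonempty)
    (hcover : A ∪ B ∪ C = Set.univ)
    (hAB : Disjoint A B) (hAC : Disjoint A C) (hBC : Disjoint B C)
    (hnoedge : ∀ a ∈ A, ∀ b ∈ B, ¬ G.Adj a b)
    (hclique : G.IsClique C)
    (tdA : TreeDecomp (G.induce (A ∪ C))) (tdB : TreeDecomp (G.induce (B ∪ C))) :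
    ∃ td : TreeDecomp G, tdAlpha td = max (tdAlpha tdA) (tdAlpha tdB) := by
  classical
  -- bags containing the clique C
  have hCAclique : (G.induce (A ∪ C)).IsClique (Subtype.val ⁻¹' C) := by
    intro u hu v hv huv
    exact hclique hu hv (fun h => huv (Subtype.ext h))
  have hCBclique : (G.induce (B ∪ C)).IsClique (Subtype.val ⁻¹' C) := by
    intro u hu v hv huv
    exact hclique hu hv (fun h => huv (Subtype.ext h))
  obtain ⟨tA, htA⟩ := clique_in_bag tdA (Set.toFinite _) hCAclique
  obtain ⟨tB, htB⟩ := clique_in_bag tdB (Set.toFinite _) hCBclique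
  -- the glued tree
  set Tg := glue tdA.tree tdB.tree tA tB with hTg
  have hTgtree : Tg.IsTree := glue_isTree _ _ _ _ tdA.tree_isTree tdB.tree_isTree
  set bagV : tdA.ι ⊕ tdB.ι → Set V :=
    Sum.elim (fun t => Subtype.val '' tdA.bag t) (fun t => Subtype.val '' tdB.bag t) with hbagV
  have memA : ∀ {v : V} (hv : v ∈ A ∪ C) (t : tdA.ι),
      v ∈ Subtype.val '' tdA.bag t ↔ (⟨v, hv⟩ : ↥(A ∪ C)) ∈ tdA.bag t := by
    intro v hv t
    constructor
    · rintro ⟨x, hx, hxv⟩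
      have : x = ⟨v, hv⟩ := Subtype.ext hxv
      rwa [this] at hx
    · intro h
      exact ⟨⟨v, hv⟩, h, rfl⟩
  have memB : ∀ {v : V} (hv : v ∈ B ∪ C) (t : tdB.ι),
      v ∈ Subtype.val '' tdB.bag t ↔ (⟨v, hv⟩ : ↥(B ∪ C)) ∈ tdB.bag t := by
    intro v hv t
    constructor
    · rintro ⟨x, hx, hxv⟩
      have : x = ⟨v, hv⟩ := Subtype.ext hxv
      rwa [this] at hx
    · intro h
      exact ⟨⟨v, hv⟩, h, rfl⟩
  have rangeA : ∀ {v : V} {t : tdA.ι}, v ∈ Subtype.val '' tdA.bag t → v ∈ A ∪ C := by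
    rintro v t ⟨x, _, rfl⟩; exact x.2
  have rangeB : ∀ {v : V} {t : tdB.ι}, v ∈ Subtype.val '' tdB.bag t → v ∈ B ∪ C := by
    rintro v t ⟨x, _, rfl⟩; exact x.2
  refine ⟨⟨tdA.ι ⊕ tdB.ι, Tg, hTgtree, bagV, ?_, ?_, ?_⟩, ?_⟩
  · -- mem_bag
    intro v
    have hv : v ∈ A ∪ B ∪ C := hcover.symm ▸ Set.mem_univ v
    rcases hv with (hvA | hvB) | hvC
    · obtain ⟨t, ht⟩ := tdA.mem_bag ⟨v, Or.inl hvA⟩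
      exact ⟨.inl t, ⟨_, ht, rfl⟩⟩
    · obtain ⟨t, ht⟩ := tdB.mem_bag ⟨v, Or.inl hvB⟩
      exact ⟨.inr t, ⟨_, ht, rfl⟩⟩
    · obtain ⟨t, ht⟩ := tdA.mem_bag ⟨v, Or.inr hvC⟩
      exact ⟨.inl t, ⟨_, ht, rfl⟩⟩
  · -- edge_bag
    intro u v hadj
    have hu : u ∈ A ∪ B ∪ C := hcover.symm ▸ Set.mem_univ u
    have hv : v ∈ A ∪ B ∪ C := hcover.symm ▸ Set.mem_univ v
    have key : (u ∈ A ∪ C ∧ v ∈ A ∪ C) ∨ (u ∈ B ∪ C ∧ v ∈ B ∪ C) := by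
      rcases hu with (huA | huB) | huC <;> rcases hv with (hvA | hvB) | hvC
      · exact Or.inl ⟨Or.inl huA, Or.inl hvA⟩
      · exact absurd hadj (hnoedge u huA v hvB)
      · exact Or.inl ⟨Or.inl huA, Or.inr hvC⟩
      · exact absurd hadj.symm (hnoedge v hvA u huB)
      · exact Or.inr ⟨Or.inl huB, Or.inl hvB⟩
      · exact Or.inr ⟨Or.inl huB, Or.inr hvC⟩
      · exact Or.inl ⟨Or.inr huC, Or.inl hvA⟩
      · exact Or.inr ⟨Or.inr huC, Or.inl hvB⟩
      · exact Or.inl ⟨Or.inr huC, Or.inr hvC⟩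
    rcases key with ⟨hu', hv'⟩ | ⟨hu', hv'⟩
    · obtain ⟨t, h1, h2⟩ := tdA.edge_bag
        (show (G.induce (A ∪ C)).Adj ⟨u, hu'⟩ ⟨v, hv'⟩ from hadj)
      exact ⟨.inl t, ⟨_, h1, rfl⟩, ⟨_, h2, rfl⟩⟩
    · obtain ⟨t, h1, h2⟩ := tdB.edge_bag
        (show (G.induce (B ∪ C)).Adj ⟨u, hu'⟩ ⟨v, hv'⟩ from hadj)
      exact ⟨.inr t, ⟨_, h1, rfl⟩, ⟨_, h2, rfl⟩⟩
  · -- bag_connected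
    intro v
    have hv : v ∈ A ∪ B ∪ C := hcover.symm ▸ Set.mem_univ v
    rcases hv with (hvA | hvB) | hvC
    · have hnB : v ∉ B ∪ C := by
        rintro (h | h)
        · exact Set.disjoint_left.mp hAB hvA h
        · exact Set.disjoint_left.mp hAC hvA h
      refine Connected.map
        (G := tdA.tree.induce {t | (⟨v, Or.inl hvA⟩ : ↥(A ∪ C)) ∈ tdA.bag t})
        ⟨fun t => ⟨.inl t.1, (memA (Or.inl hvA) t.1).mpr t.2⟩, fun {x y} h => h⟩ ?_
        (tdA.bag_connected ⟨v, Or.inl hvA⟩)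
      rintro ⟨(t | t), hz⟩
      · exact ⟨⟨t, (memA (Or.inl hvA) t).mp hz⟩, rfl⟩
      · exact absurd (rangeB hz) hnB
    · have hnA : v ∉ A ∪ C := by
        rintro (h | h)
        · exact Set.disjoint_left.mp hAB h hvB
        · exact Set.disjoint_left.mp hBC hvB h
      refine Connected.map
        (G := tdB.tree.induce {t | (⟨v, Or.inl hvB⟩ : ↥(B ∪ C)) ∈ tdB.bag t})
        ⟨fun t => ⟨.inr t.1, (memB (Or.inl hvB) t.1).mpr t.2⟩, fun {x y} h => h⟩ ?_
        (tdB.bag_connected ⟨v, Or.inl hvB⟩)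
      rintro ⟨(t | t), hz⟩
      · exact absurd (rangeA hz) hnA
      · exact ⟨⟨t, (memB (Or.inl hvB) t).mp hz⟩, rfl⟩
    · have hvA' : v ∈ A ∪ C := Or.inr hvC
      have hvB' : v ∈ B ∪ C := Or.inr hvC
      have htAv : (⟨v, hvA'⟩ : ↥(A ∪ C)) ∈ tdA.bag tA := htA ⟨v, hvA'⟩ hvC
      have htBv : (⟨v, hvB'⟩ : ↥(B ∪ C)) ∈ tdB.bag tB := htB ⟨v, hvB'⟩ hvC
      have hmemtA : Sum.inl tA ∈ {t | v ∈ bagV t} := (memA hvA' tA).mpr htAv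
      have hmemtB : Sum.inr tB ∈ {t | v ∈ bagV t} := (memB hvB' tB).mpr htBv
      let gA : tdA.tree.induce {t | (⟨v, hvA'⟩ : ↥(A ∪ C)) ∈ tdA.bag t} →g
          Tg.induce {t | v ∈ bagV t} :=
        ⟨fun t => ⟨.inl t.1, (memA hvA' t.1).mpr t.2⟩, fun {x y} h => h⟩
      let gB : tdB.tree.induce {t | (⟨v, hvB'⟩ : ↥(B ∪ C)) ∈ tdB.bag t} →g
          Tg.induce {t | v ∈ bagV t} :=
        ⟨fun t => ⟨.inr t.1, (memB hvB' t.1).mpr t.2⟩, fun {x y} h => h⟩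
      have reach : ∀ z : {t | v ∈ bagV t},
          (Tg.induce {t | v ∈ bagV t}).Reachable z ⟨.inl tA, hmemtA⟩ := by
        rintro ⟨(t | t), hz⟩
        · exact ((tdA.bag_connected ⟨v, hvA'⟩) ⟨t, (memA hvA' t).mp hz⟩ ⟨tA, htAv⟩).map gA
        · refine (((tdB.bag_connected ⟨v, hvB'⟩) ⟨t, (memB hvB' t).mp hz⟩ ⟨tB, htBv⟩).map gB).trans
            (Adj.reachable ?_)
          exact (⟨rfl, rfl⟩ : Tg.Adj (.inr tB) (.inl tA))
      haveI : Nonempty ↑{t | v ∈ bagV t} := ⟨⟨.inl tA, hmemtA⟩⟩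
      exact ⟨fun x y => (reach x).trans (reach y).symm⟩
  · -- alpha computation
    have hιA : Nonempty tdA.ι := tdA.tree_isTree.isConnected.nonempty
    have hιB : Nonempty tdB.ι := tdB.tree_isTree.isConnected.nonempty
    set NA' : Set ℕ := {n | ∃ t : tdA.ι, ∃ S : Set V,
      S ⊆ Subtype.val '' tdA.bag t ∧ IsIndepOn G S ∧ S.ncard = n} with hNA'def
    set NB' : Set ℕ := {n | ∃ t : tdB.ι, ∃ S : Set V,
      S ⊆ Subtype.val '' tdB.bag t ∧ IsIndepOn G S ∧ S.ncard = n} with hNB'def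
    have hNA : NA' = {n | ∃ t, ∃ S : Set ↥(A ∪ C),
        S ⊆ tdA.bag t ∧ IsIndepOn (G.induce (A ∪ C)) S ∧ S.ncard = n} := by
      ext n
      constructor
      · rintro ⟨t, S, hsub, hind, rfl⟩
        refine ⟨t, Subtype.val ⁻¹' S, ?_, ?_, ?_⟩
        · intro x hx
          obtain ⟨y, hy, hyx⟩ := hsub hx
          have : y = x := Subtype.ext hyx
          rwa [this] at hy
        · intro u hu v hv huv
          exact hind hu hv (Subtype.val_injective.ne huv)
        · have himg : Subtype.val '' (Subtype.val ⁻¹' S : Set ↥(A ∪ C)) = S :=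
            Set.image_preimage_eq_of_subset
              (hsub.trans (Set.image_subset_range _ _))
          rw [← Set.ncard_image_of_injective (Subtype.val ⁻¹' S) Subtype.val_injective, himg]
      · rintro ⟨t, S, hsub, hind, rfl⟩
        refine ⟨t, Subtype.val '' S, Set.image_mono hsub, ?_,
          Set.ncard_image_of_injective _ Subtype.val_injective⟩
        rintro u ⟨u', hu', rfl⟩ v ⟨v', hv', rfl⟩ huv
        exact hind hu' hv' (fun h => huv (congrArg Subtype.val h))
    have hNB : NB' = {n | ∃ t, ∃ S : Set ↥(B ∪ C),
        S ⊆ tdB.bag t ∧ IsIndepOn (G.induce (B ∪ C)) S ∧ S.ncard = n} := by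
      ext n
      constructor
      · rintro ⟨t, S, hsub, hind, rfl⟩
        refine ⟨t, Subtype.val ⁻¹' S, ?_, ?_, ?_⟩
        · intro x hx
          obtain ⟨y, hy, hyx⟩ := hsub hx
          have : y = x := Subtype.ext hyx
          rwa [this] at hy
        · intro u hu v hv huv
          exact hind hu hv (Subtype.val_injective.ne huv)
        · have himg : Subtype.val '' (Subtype.val ⁻¹' S : Set ↥(B ∪ C)) = S :=
            Set.image_preimage_eq_of_subset
              (hsub.trans (Set.image_subset_range _ _))
          rw [← Set.ncard_image_of_injective (Subtype.val ⁻¹' S) Subtype.val_injective, himg]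
      · rintro ⟨t, S, hsub, hind, rfl⟩
        refine ⟨t, Subtype.val '' S, Set.image_mono hsub, ?_,
          Set.ncard_image_of_injective _ Subtype.val_injective⟩
        rintro u ⟨u', hu', rfl⟩ v ⟨v', hv', rfl⟩ huv
        exact hind hu' hv' (fun h => huv (congrArg Subtype.val h))
    have hsplit : {n | ∃ t, ∃ S : Set V, S ⊆ bagV t ∧ IsIndepOn G S ∧ S.ncard = n}
        = NA' ∪ NB' := by
      ext n
      constructor
      · rintro ⟨(t | t), S, h1, h2, h3⟩
        · exact Or.inl ⟨t, S, h1, h2, h3⟩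
        · exact Or.inr ⟨t, S, h1, h2, h3⟩
      · rintro (⟨t, S, h1, h2, h3⟩ | ⟨t, S, h1, h2, h3⟩)
        · exact ⟨.inl t, S, h1, h2, h3⟩
        · exact ⟨.inr t, S, h1, h2, h3⟩
    have hbddA : BddAbove NA' := by
      refine ⟨Fintype.card V, ?_⟩
      rintro n ⟨t, S, -, -, rfl⟩
      exact (Set.ncard_le_ncard (Set.subset_univ S) Set.finite_univ).trans_eq
        (by rw [Set.ncard_univ, Nat.card_eq_fintype_card])
    have hbddB : BddAbove NB' := by
      refine ⟨Fintype.card V, ?_⟩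
      rintro n ⟨t, S, -, -, rfl⟩
      exact (Set.ncard_le_ncard (Set.subset_univ S) Set.finite_univ).trans_eq
        (by rw [Set.ncard_univ, Nat.card_eq_fintype_card])
    have hneA : NA'.Nonempty :=
      ⟨0, Classical.arbitrary _, ∅, Set.empty_subset _, Set.pairwise_empty _, Set.ncard_empty _⟩
    have hneB : NB'.Nonempty :=
      ⟨0, Classical.arbitrary _, ∅, Set.empty_subset _, Set.pairwise_empty _, Set.ncard_empty _⟩
    show bagAlpha G bagV = max (tdAlpha tdA) (tdAlpha tdB)
    unfold tdAlpha bagAlpha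
    rw [hsplit, csSup_union hbddA hneA hbddB hneB, hNA, hNB]
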